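/- arXiv:2505.12003 — 2 statements merged into one kernel-verified Lean document; each statement's English description precedes it below -/
import Mathlib

section
/- Let h, h' ∈ ℕ, W̃ ∈ ℝ^{h'×h} with spectral norm ‖W̃‖₂ ≤ 1, b̃ ∈ ℝ^{h'}, and τ ∈ [0,2]. Define Φ̃ : ℝ^h → ℝ^h by Φ̃(y) = y − τ W̃ᵀ ReLU(W̃y + b̃), and define Φ : ℝ^{h+3} → ℝ^{h+3} by Φ(x) = (max{x₁,x₂}, min{x₁,x₂}, x₃, Φ̃(x₄,…,x_{h+3})). Then there exist W ∈ ℝ^{(h'+3)×(h+3)} with ‖W‖₂ ≤ 1 and b ∈ ℝ^{h'+3} such that Φ(x) = x − 2 Wᵀ ReLU(Wx + b) for all x ∈ ℝ^{h+3}. In particular, the set Ẽ_{h,σ} is a subset of E_{h+3,σ} for σ = ReLU. -/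
open scoped BigOperators

noncomputable section

def relu (t : ℝ) : ℝ := max t 0

def entrywise {n : ℕ} (σ : ℝ → ℝ) (x : EuclideanSpace ℝ (Fin n)) : EuclideanSpace ℝ (Fin n) :=
  WithLp.toLp 2 (fun i => σ (x i))

def matVec {k h : ℕ} (W : Matrix (Fin k) (Fin h) ℝ) (x : EuclideanSpace ℝ (Fin h)) :
    EuclideanSpace ℝ (Fin k) :=
  Matrix.toEuclideanLin W x

/-- Spectral norm of a real matrix, as the operator norm between Euclidean spaces. -/
def specNorm {k h : ℕ} (W : Matrix (Fin k) (Fin h) ℝ) : ℝ :=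
  ‖LinearMap.toContinuousLinearMap (Matrix.toEuclideanLin W)‖

/-- Membership in `E_{h,σ}` with `σ = ReLU`. -/
def IsEulerStep {h : ℕ} (Φ : EuclideanSpace ℝ (Fin h) → EuclideanSpace ℝ (Fin h)) : Prop :=
  ∃ (k : ℕ) (W : Matrix (Fin k) (Fin h) ℝ) (b : EuclideanSpace ℝ (Fin k)) (τ : ℝ),
    0 ≤ τ ∧ τ ≤ 2 ∧ specNorm W ≤ 1 ∧
    ∀ x, Φ x = x - τ • matVec W.transpose (entrywise relu (matVec W x + b))

def compChain {α : Type*} : (L : ℕ) → (Fin L → α → α) → α → α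
  | 0, _, x => x
  | L + 1, Φ, x => Φ (Fin.last L) (compChain L (fun i => Φ i.castSucc) x)

/-- Membership in `G_{d,σ}(X,ℝ)` with `σ = ReLU`. -/
def InG {d : ℕ} (X : Set (EuclideanSpace ℝ (Fin d))) (g : EuclideanSpace ℝ (Fin d) → ℝ) : Prop :=
  LipschitzOnWith 1 g X ∧
  ∃ (h L : ℕ) (Qhat : Matrix (Fin h) (Fin d) ℝ) (qhat : EuclideanSpace ℝ (Fin h))
    (Φ : Fin L → (EuclideanSpace ℝ (Fin h) → EuclideanSpace ℝ (Fin h)))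
    (v : EuclideanSpace ℝ (Fin h)),
    (∀ ℓ, IsEulerStep (Φ ℓ)) ∧ ‖v‖ = 1 ∧
    ∀ x ∈ X, g x = ∑ i, v i * compChain L Φ (matVec Qhat x + qhat) i

def concatE {h₁ h₂ : ℕ} (u : EuclideanSpace ℝ (Fin h₁)) (v : EuclideanSpace ℝ (Fin h₂)) :
    EuclideanSpace ℝ (Fin (h₁ + h₂)) :=
  WithLp.toLp 2 (Fin.append (fun i => u i) (fun i => v i))

/-- The residual blocks in `Ẽ_{h,σ}`: `(max{x₁,x₂}, min{x₁,x₂}, x₃, Φ'(x₄,…,x_{h+3}))`. -/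
def tildeLayer {h : ℕ} (Φ' : EuclideanSpace ℝ (Fin h) → EuclideanSpace ℝ (Fin h))
    (x : EuclideanSpace ℝ (Fin (h + 3))) : EuclideanSpace ℝ (Fin (h + 3)) :=
  WithLp.toLp 2 fun j =>
    if _h0 : (j : ℕ) = 0 then max (x ⟨0, by omega⟩) (x ⟨1, by omega⟩)
    else if _h1 : (j : ℕ) = 1 then min (x ⟨0, by omega⟩) (x ⟨1, by omega⟩)
    else if _h2 : (j : ℕ) = 2 then x ⟨2, by omega⟩
    else Φ' (WithLp.toLp 2 fun i => x ⟨(i : ℕ) + 3, by have := i.isLt; omega⟩)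
      ⟨(j : ℕ) - 3, by have := j.isLt; omega⟩

/-- Membership in `Ẽ_{h,σ}` with `σ = ReLU`. -/
def IsTildeLayer {h : ℕ} (Φ : EuclideanSpace ℝ (Fin (h + 3)) → EuclideanSpace ℝ (Fin (h + 3))) :
    Prop :=
  ∃ Φ', IsEulerStep Φ' ∧ ∀ x, Φ x = tildeLayer Φ' x

def emb0 {n : ℕ} : Fin 1 → Fin (n + 3) := fun _ => ⟨0, by omega⟩
def emb1 {n : ℕ} : Fin 1 → Fin (n + 3) := fun _ => ⟨1, by omega⟩
def emb2 {n : ℕ} : Fin 1 → Fin (n + 3) := fun _ => ⟨2, by omega⟩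
def embT {n : ℕ} : Fin n → Fin (n + 3) := fun i => ⟨(i : ℕ) + 3, by have := i.isLt; omega⟩

/-- Membership in `R_{d,m}` for `m = (1,1,1,n)`: each block row of the matrix has spectral
norm at most `1`. -/
def memRm {d n : ℕ} (Q : Matrix (Fin (n + 3)) (Fin d) ℝ) : Prop :=
  specNorm (Q.submatrix emb0 id) ≤ 1 ∧ specNorm (Q.submatrix emb1 id) ≤ 1 ∧
    specNorm (Q.submatrix emb2 id) ≤ 1 ∧ specNorm (Q.submatrix embT id) ≤ 1

def rowBlockSum {n r : ℕ} (A : Matrix (Fin (n + 3)) (Fin (n + 3)) ℝ)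
    (e : Fin r → Fin (n + 3)) : ℝ :=
  specNorm (A.submatrix e emb0) + specNorm (A.submatrix e emb1) +
    specNorm (A.submatrix e emb2) + specNorm (A.submatrix e embT)

/-- Membership in `L_m` for `m = (1,1,1,n)`: for each block row, the sum of the spectral
norms of the blocks is at most `1`. -/
def memLm {n : ℕ} (A : Matrix (Fin (n + 3)) (Fin (n + 3)) ℝ) : Prop :=
  rowBlockSum A emb0 ≤ 1 ∧ rowBlockSum A emb1 ≤ 1 ∧
    rowBlockSum A emb2 ≤ 1 ∧ rowBlockSum A embT ≤ 1

/-- `Φ_{L+1} ∘ A_L ∘ ⋯ ∘ Φ₂ ∘ A₁ ∘ Φ₁`, the alternating composition. -/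
def altChain {α : Type*} : (L : ℕ) → (Fin (L + 1) → α → α) → (Fin L → α → α) → α → α
  | 0, Φ, _, x => Φ 0 x
  | L + 1, Φ, A, x =>
      Φ (Fin.last (L + 1)) (A (Fin.last L)
        (altChain L (fun i => Φ i.castSucc) (fun i => A i.castSucc) x))

/-- Membership in the fixed-width class `tilde-G_{d,σ,n+3}(X,ℝ)` with `σ = ReLU`. -/
def InTildeG {d n : ℕ} (X : Set (EuclideanSpace ℝ (Fin d)))
    (g : EuclideanSpace ℝ (Fin d) → ℝ) : Prop :=
  ∃ (L : ℕ) (Qhat : Matrix (Fin (n + 3)) (Fin d) ℝ) (qhat : EuclideanSpace ℝ (Fin (n + 3)))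
    (Φ : Fin (L + 1) → (EuclideanSpace ℝ (Fin (n + 3)) → EuclideanSpace ℝ (Fin (n + 3))))
    (Ahat : Fin L → Matrix (Fin (n + 3)) (Fin (n + 3)) ℝ)
    (ahat : Fin L → EuclideanSpace ℝ (Fin (n + 3)))
    (v : EuclideanSpace ℝ (Fin (n + 3))),
    memRm Qhat ∧ (∀ ℓ, IsTildeLayer (Φ ℓ)) ∧ (∀ ℓ, memLm (Ahat ℓ)) ∧ (∑ i, |v i|) ≤ 1 ∧
    ∀ x ∈ X,
      g x = ∑ i, v i *
        altChain L Φ (fun ℓ u => matVec (Ahat ℓ) u + ahat ℓ) (matVec Qhat x + qhat) i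

end

namespace Stmt9Aux

lemma sum3 {n : ℕ} (f : Fin (n+3) → ℝ) :
    ∑ j, f j = f ⟨0, by omega⟩ + f ⟨1, by omega⟩ + f ⟨2, by omega⟩ +
      ∑ i : Fin n, f ⟨(i:ℕ)+3, by have := i.isLt; omega⟩ := by
  rw [Fin.sum_univ_succ, Fin.sum_univ_succ, Fin.sum_univ_succ]
  have key : ∀ i : Fin n, (i.succ.succ.succ : Fin (n+3)) = ⟨(i:ℕ)+3, by have := i.isLt; omega⟩ := by
    intro i
    apply Fin.ext
    simp
  simp only [key]
  have e0 : (0 : Fin (n+3)) = ⟨0, by omega⟩ := rfl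
  have e1 : (Fin.succ (0 : Fin (n+2))) = (⟨1, by omega⟩ : Fin (n+3)) := rfl
  have e2 : (Fin.succ (Fin.succ (0 : Fin (n+1)))) = (⟨2, by omega⟩ : Fin (n+3)) := rfl
  rw [e0, e1, e2]; ring

lemma matVec_apply' {k h : ℕ} (W : Matrix (Fin k) (Fin h) ℝ) (x : EuclideanSpace ℝ (Fin h)) (i : Fin k) :
    matVec W x i = ∑ j, W i j * x j := rfl

lemma relu_mul (a t : ℝ) (ha : 0 ≤ a) : relu (a * t) = a * relu t := by
  unfold relu
  rw [mul_max_of_nonneg _ _ ha, mul_zero]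

lemma relu_zero : relu 0 = 0 := by simp [relu]

lemma max_eq_relu (a b : ℝ) : max a b = a + relu (b - a) := by
  rcases le_total a b with hab | hab
  · rw [max_eq_right hab, relu, max_eq_left (by linarith)]; ring
  · rw [max_eq_left hab, relu, max_eq_right (by linarith)]; ring

lemma min_eq_relu (a b : ℝ) : min a b = b - relu (b - a) := by
  rcases le_total a b with hab | hab
  · rw [min_eq_left hab, relu, max_eq_left (by linarith)]; ring
  · rw [min_eq_right hab, relu, max_eq_right (by linarith)]; ring

/-- The matrix used in statement 9. -/
def auxW {h h' : ℕ} (Wt : Matrix (Fin h') (Fin h) ℝ) (s c : ℝ) :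
    Matrix (Fin (h'+3)) (Fin (h+3)) ℝ :=
  fun i j =>
    if _hij : 3 ≤ (i:ℕ) ∧ 3 ≤ (j:ℕ) then
      s * Wt ⟨(i:ℕ)-3, by have := i.isLt; omega⟩ ⟨(j:ℕ)-3, by have := j.isLt; omega⟩
    else if (i:ℕ) = 0 ∧ (j:ℕ) = 0 then -c
    else if (i:ℕ) = 0 ∧ (j:ℕ) = 1 then c
    else 0

def auxb {h' : ℕ} (bt : EuclideanSpace ℝ (Fin h')) (s : ℝ) : EuclideanSpace ℝ (Fin (h'+3)) :=
  WithLp.toLp 2 (fun i => if _hi : 3 ≤ (i:ℕ) then s * bt ⟨(i:ℕ)-3, by have := i.isLt; omega⟩ else 0)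

end Stmt9Aux

set_option maxHeartbeats 2000000 in
open Stmt9Aux in
/-- Every map in `Ẽ_{h,ReLU}` — i.e. `(max{x₁,x₂}, min{x₁,x₂}, x₃, Φ̃(x₄,…))`
with `Φ̃(y) = y - τ W̃ᵀ ReLU(W̃y + b̃)`, `‖W̃‖₂ ≤ 1`, `τ ∈ [0,2]` — can be written as
`x ↦ x - 2 Wᵀ ReLU(Wx + b)` with `‖W‖₂ ≤ 1`; in particular `Ẽ_{h,ReLU} ⊆ E_{h+3,ReLU}`. -/
theorem stmt9 (h h' : ℕ) (Wt : Matrix (Fin h') (Fin h) ℝ) (hWt : specNorm Wt ≤ 1)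
    (bt : EuclideanSpace ℝ (Fin h')) (τ : ℝ) (hτ0 : 0 ≤ τ) (hτ2 : τ ≤ 2) :
    (∃ (W : Matrix (Fin (h' + 3)) (Fin (h + 3)) ℝ) (b : EuclideanSpace ℝ (Fin (h' + 3))),
      specNorm W ≤ 1 ∧
      ∀ x : EuclideanSpace ℝ (Fin (h + 3)),
        tildeLayer (fun y => y - τ • matVec Wt.transpose (entrywise relu (matVec Wt y + bt))) x =
          x - (2 : ℝ) • matVec W.transpose (entrywise relu (matVec W x + b))) ∧
    IsEulerStep
      (tildeLayer (fun y => y - τ • matVec Wt.transpose (entrywise relu (matVec Wt y + bt)))) := by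
  set s : ℝ := Real.sqrt (τ/2) with hs_def
  set c : ℝ := (Real.sqrt 2)⁻¹ with hc_def
  have hs0 : 0 ≤ s := Real.sqrt_nonneg _
  have hs2 : s * s = τ/2 := Real.mul_self_sqrt (by linarith)
  have hs1 : s ≤ 1 := by
    rw [hs_def, show (1:ℝ) = Real.sqrt 1 by rw [Real.sqrt_one]]
    exact Real.sqrt_le_sqrt (by linarith)
  have hc0 : 0 ≤ c := by positivity
  have hc2 : c * c = 1/2 := by
    rw [hc_def, ← mul_inv, Real.mul_self_sqrt (by norm_num)]
    norm_num
  -- operator norm bound for Wt, pointwise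
  have hWt' : ∀ v : EuclideanSpace ℝ (Fin h), ‖matVec Wt v‖ ≤ ‖v‖ := by
    intro v
    calc ‖matVec Wt v‖
        = ‖(LinearMap.toContinuousLinearMap (Matrix.toEuclideanLin Wt)) v‖ := rfl
      _ ≤ specNorm Wt * ‖v‖ := ContinuousLinearMap.le_opNorm _ _
      _ ≤ 1 * ‖v‖ := mul_le_mul_of_nonneg_right hWt (norm_nonneg v)
      _ = ‖v‖ := one_mul _
  set W : Matrix (Fin (h'+3)) (Fin (h+3)) ℝ := auxW Wt s c with hW_def
  set b : EuclideanSpace ℝ (Fin (h'+3)) := auxb bt s with hb_def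
  -- entries of W
  have hW00 : W ⟨0, by omega⟩ ⟨0, by omega⟩ = -c := by simp [hW_def, auxW]
  have hW01 : W ⟨0, by omega⟩ ⟨1, by omega⟩ = c := by simp [hW_def, auxW]
  have hW0row : ∀ j : Fin (h+3), 2 ≤ (j:ℕ) → W ⟨0, by omega⟩ j = 0 := by
    intro j hj
    simp only [hW_def, auxW]
    rw [dif_neg (by omega), if_neg (by omega), if_neg (by omega)]
  have hW12 : ∀ (i : Fin (h'+3)) (j : Fin (h+3)), (i:ℕ) = 1 ∨ (i:ℕ) = 2 → W i j = 0 := by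
    intro i j hi
    simp only [hW_def, auxW]
    rw [dif_neg (by omega), if_neg (by omega), if_neg (by omega)]
  have hWT : ∀ (i : Fin h') (j : Fin h),
      W ⟨(i:ℕ)+3, by have := i.isLt; omega⟩ ⟨(j:ℕ)+3, by have := j.isLt; omega⟩ = s * Wt i j := by
    intro i j
    simp only [hW_def, auxW]
    rw [dif_pos (by omega)]
    congr 1 <;> try exact Fin.ext (by simp)
  have hWTlow : ∀ (i : Fin h') (j : Fin (h+3)), (j:ℕ) < 3 →
      W ⟨(i:ℕ)+3, by have := i.isLt; omega⟩ j = 0 := by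
    intro i j hj
    simp only [hW_def, auxW]
    rw [dif_neg (by omega), if_neg (by omega), if_neg (by omega)]
  have hb012 : ∀ i : Fin (h'+3), (i:ℕ) < 3 → b i = 0 := by
    intro i hi; simp only [hb_def, auxb]; rw [dif_neg (by omega)]
  have hbT : ∀ i : Fin h', b ⟨(i:ℕ)+3, by have := i.isLt; omega⟩ = s * bt i := by
    intro i
    simp only [hb_def, auxb]
    rw [dif_pos (by omega)]
    congr 1
    try exact Fin.ext (by simp)
  -- spectral norm bound
  have hWnorm : specNorm W ≤ 1 := by
    apply ContinuousLinearMap.opNorm_le_bound _ zero_le_one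
    intro x
    rw [one_mul]
    have hx : (LinearMap.toContinuousLinearMap (Matrix.toEuclideanLin W)) x = matVec W x := rfl
    rw [hx]
    set y : EuclideanSpace ℝ (Fin h) := (WithLp.toLp 2 fun i => x ⟨(i:ℕ)+3, by have := i.isLt; omega⟩) with hy_def
    rw [EuclideanSpace.norm_eq, EuclideanSpace.norm_eq]
    apply Real.sqrt_le_sqrt
    have hWy : ∑ i : Fin h', ‖(matVec Wt y) i‖^2 ≤ ∑ i : Fin h, ‖y i‖^2 := by
      have h1 := hWt' y
      rw [EuclideanSpace.norm_eq, EuclideanSpace.norm_eq] at h1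
      nlinarith [Real.sq_sqrt (by positivity : (0:ℝ) ≤ ∑ i : Fin h', ‖(matVec Wt y) i‖^2),
        Real.sq_sqrt (by positivity : (0:ℝ) ≤ ∑ i : Fin h, ‖y i‖^2),
        Real.sqrt_nonneg (∑ i : Fin h', ‖(matVec Wt y) i‖^2),
        Real.sqrt_nonneg (∑ i : Fin h, ‖y i‖^2)]
    rw [sum3 (fun i => ‖matVec W x i‖^2), sum3 (fun j => ‖x j‖^2)]
    -- compute coordinates of matVec W x
    have hrow0 : matVec W x ⟨0, by omega⟩ = c * (x ⟨1, by omega⟩ - x ⟨0, by omega⟩) := by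
      rw [matVec_apply', sum3 (fun j => W ⟨0, by omega⟩ j * x j)]
      rw [hW00, hW01, hW0row _ (by norm_num)]
      rw [Finset.sum_eq_zero (fun i _ => by rw [hW0row _ (by simp)]; ring)]
      ring
    have hrow1 : matVec W x ⟨1, by omega⟩ = 0 := by
      rw [matVec_apply']
      exact Finset.sum_eq_zero (fun j _ => by
        rw [hW12 ⟨1, by omega⟩ j (Or.inl rfl)]; ring)
    have hrow2 : matVec W x ⟨2, by omega⟩ = 0 := by
      rw [matVec_apply']
      exact Finset.sum_eq_zero (fun j _ => by
        rw [hW12 ⟨2, by omega⟩ j (Or.inr rfl)]; ring)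
    have hrowT : ∀ i : Fin h', matVec W x ⟨(i:ℕ)+3, by have := i.isLt; omega⟩
        = s * (matVec Wt y i) := by
      intro i
      rw [matVec_apply', sum3 (fun j => W ⟨(i:ℕ)+3, by have := i.isLt; omega⟩ j * x j)]
      rw [hWTlow _ _ (by norm_num), hWTlow _ _ (by norm_num), hWTlow _ _ (by norm_num)]
      have : ∀ j : Fin h, W ⟨(i:ℕ)+3, by have := i.isLt; omega⟩ ⟨(j:ℕ)+3, by have := j.isLt; omega⟩
          * x ⟨(j:ℕ)+3, by have := j.isLt; omega⟩ = s * (Wt i j * y j) := by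
        intro j; rw [hWT]; simp [hy_def]; ring
      simp only [this]
      rw [← Finset.mul_sum, matVec_apply']
      ring
    rw [hrow0, hrow1, hrow2]
    simp only [hrowT]
    have hsq : ∀ t : ℝ, ‖t‖^2 = t^2 := fun t => by rw [Real.norm_eq_abs, sq_abs]
    simp only [hsq]
    have hT : ∑ i : Fin h', (s * matVec Wt y i)^2 ≤ ∑ i : Fin h, (y i)^2 := by
      have e1 : ∑ i : Fin h', (s * matVec Wt y i)^2 = (s*s) * ∑ i : Fin h', (matVec Wt y i)^2 := by
        rw [Finset.mul_sum]; congr 1; funext i; ring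
      have e2 : ∑ i : Fin h', (matVec Wt y i)^2 ≤ ∑ i : Fin h, (y i)^2 := by
        simpa only [hsq] using hWy
      calc ∑ i : Fin h', (s * matVec Wt y i)^2 = (s*s) * ∑ i : Fin h', (matVec Wt y i)^2 := e1
        _ ≤ 1 * ∑ i : Fin h, (y i)^2 := by
            apply mul_le_mul (by nlinarith) e2 (by positivity) zero_le_one
        _ = ∑ i : Fin h, (y i)^2 := one_mul _
    have hyx : ∀ i : Fin h, y i = x ⟨(i:ℕ)+3, by have := i.isLt; omega⟩ := fun i => rfl
    simp only [hyx] at hT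
    nlinarith [hT, sq_nonneg (x ⟨1, by omega⟩ + x ⟨0, by omega⟩),
      sq_nonneg (x ⟨2, by omega⟩), sq_nonneg (x ⟨1, by omega⟩ - x ⟨0, by omega⟩)]
  -- the main functional equation
  have hMain : ∀ x : EuclideanSpace ℝ (Fin (h + 3)),
      tildeLayer (fun y => y - τ • matVec Wt.transpose (entrywise relu (matVec Wt y + bt))) x =
        x - (2 : ℝ) • matVec W.transpose (entrywise relu (matVec W x + b)) := by
    intro x
    set y : EuclideanSpace ℝ (Fin h) := (WithLp.toLp 2 fun i => x ⟨(i:ℕ)+3, by have := i.isLt; omega⟩) with hy_def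
    -- coordinates of matVec W x + b
    have hrow0 : (matVec W x + b) ⟨0, by omega⟩ = c * (x ⟨1, by omega⟩ - x ⟨0, by omega⟩) := by
      have : (matVec W x + b) ⟨0, by omega⟩ = matVec W x ⟨0, by omega⟩ + b ⟨0, by omega⟩ := rfl
      rw [this, hb012 _ (by norm_num), matVec_apply', sum3 (fun j => W ⟨0, by omega⟩ j * x j)]
      rw [hW00, hW01, hW0row _ (by norm_num)]
      rw [Finset.sum_eq_zero (fun i _ => by rw [hW0row _ (by simp)]; ring)]
      ring
    have hrow1 : (matVec W x + b) ⟨1, by omega⟩ = 0 := by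
      have : (matVec W x + b) ⟨1, by omega⟩ = matVec W x ⟨1, by omega⟩ + b ⟨1, by omega⟩ := rfl
      rw [this, hb012 _ (by norm_num), matVec_apply']
      rw [Finset.sum_eq_zero (fun j _ => by
        rw [hW12 ⟨1, by omega⟩ j (Or.inl rfl)]; ring)]
      ring
    have hrow2 : (matVec W x + b) ⟨2, by omega⟩ = 0 := by
      have : (matVec W x + b) ⟨2, by omega⟩ = matVec W x ⟨2, by omega⟩ + b ⟨2, by omega⟩ := rfl
      rw [this, hb012 _ (by norm_num), matVec_apply']
      rw [Finset.sum_eq_zero (fun j _ => by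
        rw [hW12 ⟨2, by omega⟩ j (Or.inr rfl)]; ring)]
      ring
    have hrowT : ∀ i : Fin h', (matVec W x + b) ⟨(i:ℕ)+3, by have := i.isLt; omega⟩
        = s * ((matVec Wt y + bt) i) := by
      intro i
      have e : (matVec W x + b) ⟨(i:ℕ)+3, by have := i.isLt; omega⟩
          = matVec W x ⟨(i:ℕ)+3, by have := i.isLt; omega⟩
            + b ⟨(i:ℕ)+3, by have := i.isLt; omega⟩ := rfl
      rw [e, hbT, matVec_apply', sum3 (fun j => W ⟨(i:ℕ)+3, by have := i.isLt; omega⟩ j * x j)]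
      rw [hWTlow _ _ (by norm_num), hWTlow _ _ (by norm_num), hWTlow _ _ (by norm_num)]
      have : ∀ j : Fin h, W ⟨(i:ℕ)+3, by have := i.isLt; omega⟩ ⟨(j:ℕ)+3, by have := j.isLt; omega⟩
          * x ⟨(j:ℕ)+3, by have := j.isLt; omega⟩ = s * (Wt i j * y j) := by
        intro j; rw [hWT]; simp [hy_def]; ring
      simp only [this]
      rw [← Finset.mul_sum]
      have e2 : (matVec Wt y + bt) i = matVec Wt y i + bt i := rfl
      rw [e2, matVec_apply']
      ring
    -- coordinates of u = entrywise relu (...)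
    set u : EuclideanSpace ℝ (Fin (h'+3)) := entrywise relu (matVec W x + b) with hu_def
    have hu0 : u ⟨0, by omega⟩ = c * relu (x ⟨1, by omega⟩ - x ⟨0, by omega⟩) := by
      have e : u ⟨0, by omega⟩ = relu ((matVec W x + b) ⟨0, by omega⟩) := rfl
      rw [e, hrow0, relu_mul _ _ hc0]
    have hu1 : u ⟨1, by omega⟩ = 0 := by
      have e : u ⟨1, by omega⟩ = relu ((matVec W x + b) ⟨1, by omega⟩) := rfl
      rw [e, hrow1, relu_zero]
    have hu2 : u ⟨2, by omega⟩ = 0 := by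
      have e : u ⟨2, by omega⟩ = relu ((matVec W x + b) ⟨2, by omega⟩) := rfl
      rw [e, hrow2, relu_zero]
    have huT : ∀ i : Fin h', u ⟨(i:ℕ)+3, by have := i.isLt; omega⟩
        = s * relu ((matVec Wt y + bt) i) := by
      intro i
      have e : u ⟨(i:ℕ)+3, by have := i.isLt; omega⟩
          = relu ((matVec W x + b) ⟨(i:ℕ)+3, by have := i.isLt; omega⟩) := rfl
      rw [e, hrowT, relu_mul _ _ hs0]
    -- now the coordinatewise equality
    ext j
    have hRHS : (x - (2 : ℝ) • matVec W.transpose u) j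
        = x j - 2 * ∑ i : Fin (h'+3), W i j * u i := by
      have e : (x - (2 : ℝ) • matVec W.transpose u) j = x j - 2 * (matVec W.transpose u j) := rfl
      rw [e, matVec_apply']
      congr 2
    rw [hRHS]
    have hsum : ∑ i : Fin (h'+3), W i j * u i
        = W ⟨0, by omega⟩ j * u ⟨0, by omega⟩ +
          (if hj3 : 3 ≤ (j:ℕ) then
            ∑ i : Fin h', s * Wt i ⟨(j:ℕ)-3, by have := j.isLt; omega⟩
              * (s * relu ((matVec Wt y + bt) i))
          else 0) := by
      rw [sum3 (fun i => W i j * u i)]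
      rw [hW12 ⟨1, by omega⟩ j (Or.inl rfl), hW12 ⟨2, by omega⟩ j (Or.inr rfl)]
      split_ifs with hj3
      · congr 1
        · ring
        · apply Finset.sum_congr rfl
          intro i _
          rw [huT]
          congr 1
          have ej : j = ⟨((j:ℕ)-3)+3, by have := j.isLt; omega⟩ := Fin.ext (by simp; omega)
          conv_lhs => rw [ej]
          rw [show (⟨(j:ℕ)-3, by have := j.isLt; omega⟩ : Fin h)
              = ⟨((⟨(j:ℕ)-3, by have := j.isLt; omega⟩ : Fin h) : ℕ), by
                have := j.isLt; simp; omega⟩ from rfl] at *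
          exact hWT i ⟨(j:ℕ)-3, by have := j.isLt; omega⟩
      · rw [Finset.sum_eq_zero (fun i _ => by rw [hWTlow _ _ (by omega)]; ring)]
        ring
    rw [hsum]
    -- case split on j
    simp only [tildeLayer]
    by_cases hj0 : (j:ℕ) = 0
    · have ej : j = ⟨0, by omega⟩ := Fin.ext hj0
      rw [ej, dif_pos rfl, dif_neg (by omega : ¬(3:ℕ) ≤ 0), hW00, hu0, max_eq_relu]
      have hcc : c * (c * relu (x ⟨1, by omega⟩ - x ⟨0, by omega⟩))
          = (1/2) * relu (x ⟨1, by omega⟩ - x ⟨0, by omega⟩) := by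
        rw [← mul_assoc, hc2]
      rw [show (-c) * (c * relu (x ⟨1, by omega⟩ - x ⟨0, by omega⟩))
          = -(c * (c * relu (x ⟨1, by omega⟩ - x ⟨0, by omega⟩))) from by ring, hcc]
      ring
    by_cases hj1 : (j:ℕ) = 1
    · have ej : j = ⟨1, by omega⟩ := Fin.ext hj1
      rw [ej, dif_neg (by omega : ¬(1:ℕ) = 0), dif_pos rfl, dif_neg (by omega : ¬(3:ℕ) ≤ 1),
        hW01, hu0, min_eq_relu]
      have hcc : c * (c * relu (x ⟨1, by omega⟩ - x ⟨0, by omega⟩))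
          = (1/2) * relu (x ⟨1, by omega⟩ - x ⟨0, by omega⟩) := by
        rw [← mul_assoc, hc2]
      rw [hcc]
      ring
    by_cases hj2 : (j:ℕ) = 2
    · have ej : j = ⟨2, by omega⟩ := Fin.ext hj2
      rw [ej, dif_neg (by omega : ¬(2:ℕ) = 0), dif_neg (by omega : ¬(2:ℕ) = 1), dif_pos rfl,
        dif_neg (by omega : ¬(3:ℕ) ≤ 2), hW0row _ (le_refl 2)]
      ring
    · -- tail case
      have hj3 : 3 ≤ (j:ℕ) := by omega
      rw [dif_neg hj0, dif_neg hj1, dif_neg hj2, dif_pos hj3, hW0row _ (by omega)]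
      set i0 : Fin h := ⟨(j:ℕ)-3, by have := j.isLt; omega⟩ with hi0_def
      have hyz : (WithLp.toLp 2 fun i : Fin h => x ⟨(i:ℕ)+3, by have := i.isLt; omega⟩) = y := rfl
      rw [hyz]
      have hL : (y - τ • matVec Wt.transpose (entrywise relu (matVec Wt y + bt))) i0
          = y i0 - τ * ∑ i : Fin h', Wt i i0 * relu ((matVec Wt y + bt) i) := by
        have e : (y - τ • matVec Wt.transpose (entrywise relu (matVec Wt y + bt))) i0
            = y i0 - τ * (matVec Wt.transpose (entrywise relu (matVec Wt y + bt)) i0) := rfl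
        rw [e, matVec_apply']
        congr 2 <;> try (apply Finset.sum_congr rfl; intro i _; rw [Matrix.transpose_apply]; rfl)
      rw [hL]
      have hyx : y i0 = x j := by
        have : (⟨(i0:ℕ)+3, by have := i0.isLt; omega⟩ : Fin (h+3)) = j :=
          Fin.ext (by simp [hi0_def]; omega)
        calc y i0 = x ⟨(i0:ℕ)+3, by have := i0.isLt; omega⟩ := rfl
          _ = x j := by rw [this]
      rw [hyx]
      have hS : ∑ i : Fin h', s * Wt i i0 * (s * relu ((matVec Wt y + bt) i))
          = (s*s) * ∑ i : Fin h', Wt i i0 * relu ((matVec Wt y + bt) i) := by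
        rw [Finset.mul_sum]
        apply Finset.sum_congr rfl
        intro i _
        ring
      rw [hS, hs2]
      ring
  exact ⟨⟨W, b, hWnorm, hMain⟩, h'+3, W, b, 2, by norm_num, le_refl 2, hWnorm, hMain⟩
end

section
/- Let d ∈ ℕ, σ = ReLU, and X ⊂ ℝ^d be compact. Set h = d + 3. Then for every 1-Lipschitz function f : X → ℝ and every ε > 0 there exists g ∈ tilde-G_{d,σ,d+3}(X,ℝ) such that max_{x∈X} |f(x) − g(x)| < ε; that is, the fixed-width class tilde-G_{d,σ,d+3}(X,ℝ) satisfies the universal approximation property for the space of 1-Lipschitz functions C₁(X,ℝ). -/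
open scoped BigOperators

noncomputable section Aux

open Finset

lemma matVec_coord {k h : ℕ} (W : Matrix (Fin k) (Fin h) ℝ) (x : EuclideanSpace ℝ (Fin h))
    (j : Fin k) : matVec W x j = ∑ i, W j i * x i := by
  simp only [matVec, Matrix.toEuclideanLin_apply, WithLp.equiv, Equiv.refl_apply]
  rfl

lemma sum_fin_add_three {n : ℕ} (F : Fin (n + 3) → ℝ) :
    ∑ j, F j = F ⟨0, by omega⟩ + F ⟨1, by omega⟩ + F ⟨2, by omega⟩ + ∑ i : Fin n, F (embT i) := by
  rw [Fin.sum_univ_succ (n := n + 2), Fin.sum_univ_succ (n := n + 1), Fin.sum_univ_succ (n := n)]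
  have : ∀ i : Fin n, F i.succ.succ.succ = F (embT i) := by
    intro i; congr 1
  simp only [this]
  have e0 : (0 : Fin (n + 3)) = (⟨0, by omega⟩ : Fin (n + 3)) := by ext; simp
  have e1 : (Fin.succ (0 : Fin (n + 2))) = (⟨1, by omega⟩ : Fin (n + 3)) := by ext; simp
  have e2 : (Fin.succ (0 : Fin (n + 1))).succ = (⟨2, by omega⟩ : Fin (n + 3)) := by ext; simp
  rw [e0, e1, e2]; ring

lemma euclid_abs_coord_le {n : ℕ} (x : EuclideanSpace ℝ (Fin n)) (i : Fin n) : |x i| ≤ ‖x‖ := by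
  rw [EuclideanSpace.norm_eq]
  rw [← Real.sqrt_sq_eq_abs]
  apply Real.sqrt_le_sqrt
  have := Finset.single_le_sum (f := fun j => ‖x j‖ ^ 2) (fun j _ => by positivity)
    (Finset.mem_univ i)
  simpa [Real.norm_eq_abs, sq_abs] using this

lemma norm_fin_one (y : EuclideanSpace ℝ (Fin 1)) : ‖y‖ = |y 0| := by
  rw [EuclideanSpace.norm_eq]
  simp [Fin.sum_univ_one, Real.norm_eq_abs, Real.sqrt_sq_eq_abs]

lemma specNorm_le_of_bound {k h : ℕ} (W : Matrix (Fin k) (Fin h) ℝ) (c : ℝ) (hc : 0 ≤ c)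
    (hb : ∀ x, ‖matVec W x‖ ≤ c * ‖x‖) : specNorm W ≤ c := by
  apply ContinuousLinearMap.opNorm_le_bound _ hc
  intro x
  exact hb x

end Aux
section Aux2
open Finset

lemma specNorm_of_zero {k h : ℕ} (W : Matrix (Fin k) (Fin h) ℝ) (hW : ∀ i j, W i j = 0) :
    specNorm W = 0 := by
  have : W = 0 := by ext i j; exact hW i j
  subst this
  simp only [specNorm, map_zero]
  simp

lemma specNorm_1x1 {c : ℝ} (W : Matrix (Fin 1) (Fin 1) ℝ) (hW : W 0 0 = c) :
    specNorm W ≤ |c| := by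
  apply specNorm_le_of_bound _ _ (abs_nonneg c)
  intro x
  rw [norm_fin_one, matVec_coord, Fin.sum_univ_one, hW, abs_mul]
  exact mul_le_mul_of_nonneg_left (euclid_abs_coord_le x 0) (abs_nonneg c)

lemma sum_mul_eq_inner {n : ℕ} (a z : EuclideanSpace ℝ (Fin n)) :
    ∑ i, a i * z i = (inner ℝ a z : ℝ) := by
  rw [PiLp.inner_apply]
  simp [RCLike.inner_apply, conj_trivial]
  exact Finset.sum_congr rfl fun i _ => mul_comm _ _

lemma specNorm_row_le {n : ℕ} (W : Matrix (Fin 1) (Fin n) ℝ) (a : EuclideanSpace ℝ (Fin n))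
    (hW : ∀ k, W 0 k = a k) : specNorm W ≤ ‖a‖ := by
  apply specNorm_le_of_bound _ _ (norm_nonneg a)
  intro x
  rw [norm_fin_one, matVec_coord]
  have : ∑ i, W 0 i * x i = (inner ℝ a x : ℝ) := by
    rw [← sum_mul_eq_inner]
    exact Finset.sum_congr rfl fun i _ => by rw [hW]
  rw [this]
  exact abs_real_inner_le_norm a x

lemma matVec_eq_self {n : ℕ} (W : Matrix (Fin n) (Fin n) ℝ)
    (hW : ∀ i j, W i j = if i = j then 1 else 0) (x : EuclideanSpace ℝ (Fin n)) :
    matVec W x = x := by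
  ext j
  rw [matVec_coord]
  rw [Finset.sum_eq_single j]
  · rw [hW]; simp
  · intro i _ hi; rw [hW]; simp [Ne.symm hi]
  · intro hj; exact absurd (Finset.mem_univ j) hj

lemma specNorm_id {n : ℕ} (W : Matrix (Fin n) (Fin n) ℝ)
    (hW : ∀ i j, W i j = if i = j then 1 else 0) : specNorm W ≤ 1 := by
  apply specNorm_le_of_bound _ _ zero_le_one
  intro x
  rw [matVec_eq_self W hW, one_mul]

lemma specNorm_fin0 {h : ℕ} (W : Matrix (Fin 0) (Fin h) ℝ) : specNorm W ≤ 1 := by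
  apply specNorm_le_of_bound _ _ zero_le_one
  intro x
  have : matVec W x = 0 := by ext i; exact i.elim0
  rw [this, norm_zero]
  positivity

lemma isEulerStep_id {h : ℕ} : IsEulerStep (id : EuclideanSpace ℝ (Fin h) → EuclideanSpace ℝ (Fin h)) := by
  refine ⟨0, 0, 0, 0, le_refl 0, by norm_num, specNorm_fin0 _, fun x => ?_⟩
  simp

lemma isTildeLayer_tlid {h : ℕ} : IsTildeLayer (tildeLayer (h := h) id) :=
  ⟨id, isEulerStep_id, fun _ => rfl⟩

lemma tl_zero {n : ℕ} (x : EuclideanSpace ℝ (Fin (n + 3))) :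
    tildeLayer (h := n) id x ⟨0, by omega⟩ = max (x ⟨0, by omega⟩) (x ⟨1, by omega⟩) := rfl

lemma tl_one {n : ℕ} (x : EuclideanSpace ℝ (Fin (n + 3))) :
    tildeLayer (h := n) id x ⟨1, by omega⟩ = min (x ⟨0, by omega⟩) (x ⟨1, by omega⟩) := rfl

lemma tl_two {n : ℕ} (x : EuclideanSpace ℝ (Fin (n + 3))) :
    tildeLayer (h := n) id x ⟨2, by omega⟩ = x ⟨2, by omega⟩ := rfl

lemma tl_embT {n : ℕ} (x : EuclideanSpace ℝ (Fin (n + 3))) (i : Fin n) :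
    tildeLayer (h := n) id x (embT i) = x (embT i) := by
  have h0 : ((embT i : Fin (n + 3)) : ℕ) ≠ 0 := by simp [embT]
  have h1 : ((embT i : Fin (n + 3)) : ℕ) ≠ 1 := by simp [embT]
  have h2 : ((embT i : Fin (n + 3)) : ℕ) ≠ 2 := by simp [embT]
  rw [tildeLayer, PiLp.toLp_apply, dif_neg h0, dif_neg h1, dif_neg h2]
  show x _ = x (embT i)
  exact congrArg x.ofLp (Fin.ext (by simp [embT]))

end Aux2
section Aux3
open Finset

variable {d : ℕ}

/-- A general affine layer matrix: rows 0,1,2 are given row vectors; tail is the identity. -/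
def M3rows (r0 r1 r2 : Fin (d + 3) → ℝ) : Matrix (Fin (d + 3)) (Fin (d + 3)) ℝ :=
  fun j k =>
    if (j : ℕ) = 0 then r0 k
    else if (j : ℕ) = 1 then r1 k
    else if (j : ℕ) = 2 then r2 k
    else if j = k then 1 else 0

/-- unit row vector at scalar coordinate `t` -/
def erow (t : ℕ) : Fin (d + 3) → ℝ := fun k => if (k : ℕ) = t then 1 else 0

/-- row vector supported on the tail block -/
def trow (a : EuclideanSpace ℝ (Fin d)) : Fin (d + 3) → ℝ := fun k =>
  if h : 3 ≤ (k : ℕ) then a ⟨(k : ℕ) - 3, by have := k.isLt; omega⟩ else 0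

lemma matVec_M3rows_zero (r0 r1 r2 : Fin (d + 3) → ℝ) (u : EuclideanSpace ℝ (Fin (d + 3))) :
    matVec (M3rows r0 r1 r2) u ⟨0, by omega⟩ = ∑ k, r0 k * u k := by
  rw [matVec_coord]
  exact Finset.sum_congr rfl fun k _ => by simp [M3rows]

lemma matVec_M3rows_one (r0 r1 r2 : Fin (d + 3) → ℝ) (u : EuclideanSpace ℝ (Fin (d + 3))) :
    matVec (M3rows r0 r1 r2) u ⟨1, by omega⟩ = ∑ k, r1 k * u k := by
  rw [matVec_coord]
  exact Finset.sum_congr rfl fun k _ => by simp [M3rows]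

lemma matVec_M3rows_two (r0 r1 r2 : Fin (d + 3) → ℝ) (u : EuclideanSpace ℝ (Fin (d + 3))) :
    matVec (M3rows r0 r1 r2) u ⟨2, by omega⟩ = ∑ k, r2 k * u k := by
  rw [matVec_coord]
  exact Finset.sum_congr rfl fun k _ => by simp [M3rows]

lemma matVec_M3rows_embT (r0 r1 r2 : Fin (d + 3) → ℝ) (u : EuclideanSpace ℝ (Fin (d + 3)))
    (i : Fin d) : matVec (M3rows r0 r1 r2) u (embT i) = u (embT i) := by
  rw [matVec_coord]
  rw [Finset.sum_eq_single (embT i)]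
  · have : M3rows r0 r1 r2 (embT i) (embT i) = 1 := by
      simp [M3rows, embT]
    rw [this, one_mul]
  · intro k _ hk
    have : M3rows r0 r1 r2 (embT i) k = 0 := by
      have h3 : ¬((embT i : Fin (d + 3)) : ℕ) = 0 := by simp [embT]
      have h4 : ¬((embT i : Fin (d + 3)) : ℕ) = 1 := by simp [embT]
      have h5 : ¬((embT i : Fin (d + 3)) : ℕ) = 2 := by simp [embT]
      simp only [M3rows, if_neg h3, if_neg h4, if_neg h5]
      exact if_neg (Ne.symm hk)
    rw [this, zero_mul]
  · intro h; exact absurd (Finset.mem_univ _) h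

/-- evaluating a unit row -/
lemma sum_erow (t : ℕ) (ht : t < d + 3) (u : EuclideanSpace ℝ (Fin (d + 3))) :
    ∑ k, erow (d := d) t k * u k = u ⟨t, ht⟩ := by
  rw [Finset.sum_eq_single (⟨t, ht⟩ : Fin (d + 3))]
  · simp [erow]
  · intro k _ hk
    have : ¬((k : Fin (d + 3)) : ℕ) = t := by
      intro h; apply hk; ext; exact h
    simp [erow, this]
  · intro h; exact absurd (Finset.mem_univ _) h

/-- evaluating a zero row -/
lemma sum_zrow (u : EuclideanSpace ℝ (Fin (d + 3))) :
    ∑ k, (0 : ℝ) * u k = 0 := by simp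

/-- evaluating a tail row -/
lemma sum_trow (a : EuclideanSpace ℝ (Fin d)) (u : EuclideanSpace ℝ (Fin (d + 3))) :
    ∑ k, trow a k * u k = ∑ i : Fin d, a i * u (embT i) := by
  rw [sum_fin_add_three (fun k => trow a k * u k)]
  have z0 : trow a ⟨0, by omega⟩ = 0 := by simp [trow]
  have z1 : trow a ⟨1, by omega⟩ = 0 := by simp [trow]
  have z2 : trow a ⟨2, by omega⟩ = 0 := by simp [trow]
  rw [z0, z1, z2]
  have : ∀ i : Fin d, trow a (embT i) = a i := by
    intro i
    have h3 : 3 ≤ ((embT i : Fin (d + 3)) : ℕ) := by simp [embT]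
    rw [trow, dif_pos h3]
    exact congrArg a.ofLp (Fin.ext (by simp [embT]))
  simp only [this]
  ring

end Aux3
section Aux4
open Finset

variable {d : ℕ}

/-- tail part of a row, as a Euclidean vector -/
def tailvec (r : Fin (d + 3) → ℝ) : EuclideanSpace ℝ (Fin d) := WithLp.toLp 2 (fun i => r (embT i))

lemma rowBlockSum_le_of (A : Matrix (Fin (d + 3)) (Fin (d + 3)) ℝ) (e : Fin 1 → Fin (d + 3)) :
    rowBlockSum A e ≤ |A (e 0) ⟨0, by omega⟩| + |A (e 0) ⟨1, by omega⟩| + |A (e 0) ⟨2, by omega⟩|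
      + ‖tailvec (A (e 0))‖ := by
  unfold rowBlockSum
  have b0 : specNorm (A.submatrix e emb0) ≤ |A (e 0) ⟨0, by omega⟩| :=
    specNorm_1x1 _ rfl
  have b1 : specNorm (A.submatrix e emb1) ≤ |A (e 0) ⟨1, by omega⟩| :=
    specNorm_1x1 _ rfl
  have b2 : specNorm (A.submatrix e emb2) ≤ |A (e 0) ⟨2, by omega⟩| :=
    specNorm_1x1 _ rfl
  have bT : specNorm (A.submatrix e embT) ≤ ‖tailvec (A (e 0))‖ :=
    specNorm_row_le _ _ fun k => rfl
  linarith

lemma embT_ne_scalar {i : Fin d} {t : ℕ} (ht : t < 3) :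
    (embT i : Fin (d + 3)) ≠ ⟨t, by omega⟩ := by
  intro h
  have := congrArg Fin.val h
  simp [embT] at this
  omega

lemma memLm_M3rows (r0 r1 r2 : Fin (d + 3) → ℝ)
    (h0 : |r0 ⟨0, by omega⟩| + |r0 ⟨1, by omega⟩| + |r0 ⟨2, by omega⟩| + ‖tailvec r0‖ ≤ 1)
    (h1 : |r1 ⟨0, by omega⟩| + |r1 ⟨1, by omega⟩| + |r1 ⟨2, by omega⟩| + ‖tailvec r1‖ ≤ 1)
    (h2 : |r2 ⟨0, by omega⟩| + |r2 ⟨1, by omega⟩| + |r2 ⟨2, by omega⟩| + ‖tailvec r2‖ ≤ 1) :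
    memLm (M3rows r0 r1 r2) := by
  have row0 : ∀ k, M3rows r0 r1 r2 (emb0 0) k = r0 k := fun k => by simp [M3rows, emb0]
  have row1 : ∀ k, M3rows r0 r1 r2 (emb1 0) k = r1 k := fun k => by simp [M3rows, emb1]
  have row2 : ∀ k, M3rows r0 r1 r2 (emb2 0) k = r2 k := fun k => by simp [M3rows, emb2]
  refine ⟨?_, ?_, ?_, ?_⟩
  · calc rowBlockSum (M3rows r0 r1 r2) emb0 ≤ _ := rowBlockSum_le_of _ _
      _ ≤ 1 := by
        simp only [row0]
        have : tailvec (fun k => M3rows r0 r1 r2 (emb0 0) k) = tailvec r0 := by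
          ext i; simp [tailvec, row0]
        simpa [row0, this] using h0
  · calc rowBlockSum (M3rows r0 r1 r2) emb1 ≤ _ := rowBlockSum_le_of _ _
      _ ≤ 1 := by
        have : tailvec (fun k => M3rows r0 r1 r2 (emb1 0) k) = tailvec r1 := by
          ext i; simp [tailvec, row1]
        simpa [row1, this] using h1
  · calc rowBlockSum (M3rows r0 r1 r2) emb2 ≤ _ := rowBlockSum_le_of _ _
      _ ≤ 1 := by
        have : tailvec (fun k => M3rows r0 r1 r2 (emb2 0) k) = tailvec r2 := by
          ext i; simp [tailvec, row2]
        simpa [row2, this] using h2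
  · -- tail block row
    have hent : ∀ (i : Fin d) (k : Fin (d + 3)),
        M3rows r0 r1 r2 (embT i) k = if embT i = k then 1 else 0 := by
      intro i k
      have h3 : ¬((embT i : Fin (d + 3)) : ℕ) = 0 := by simp [embT]
      have h4 : ¬((embT i : Fin (d + 3)) : ℕ) = 1 := by simp [embT]
      have h5 : ¬((embT i : Fin (d + 3)) : ℕ) = 2 := by simp [embT]
      simp only [M3rows, if_neg h3, if_neg h4, if_neg h5]
    have z0 : specNorm ((M3rows r0 r1 r2).submatrix embT emb0) = 0 := by
      apply specNorm_of_zero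
      intro i j
      rw [Matrix.submatrix_apply, hent, if_neg]
      intro h
      have := congrArg Fin.val h
      simp [embT, emb0] at this
    have z1 : specNorm ((M3rows r0 r1 r2).submatrix embT emb1) = 0 := by
      apply specNorm_of_zero
      intro i j
      rw [Matrix.submatrix_apply, hent, if_neg]
      intro h
      have := congrArg Fin.val h
      simp [embT, emb1] at this
    have z2 : specNorm ((M3rows r0 r1 r2).submatrix embT emb2) = 0 := by
      apply specNorm_of_zero
      intro i j
      rw [Matrix.submatrix_apply, hent, if_neg]
      intro h
      have := congrArg Fin.val h
      simp [embT, emb2] at this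
    have zT : specNorm ((M3rows r0 r1 r2).submatrix embT embT) ≤ 1 := by
      apply specNorm_id
      intro i j
      rw [Matrix.submatrix_apply, hent]
      by_cases h : i = j
      · subst h; simp
      · rw [if_neg (fun hh => h (by ext; have := congrArg Fin.val hh; simp [embT] at this; omega)),
          if_neg h]
    unfold rowBlockSum
    rw [z0, z1, z2]
    linarith

/-- initial matrix: zero scalar rows, identity tail -/
def Qinit : Matrix (Fin (d + 3)) (Fin d) ℝ := fun j k => if (j : ℕ) = (k : ℕ) + 3 then 1 else 0

lemma memRm_Qinit : memRm (Qinit (d := d)) := by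
  have hz : ∀ (e : Fin 1 → Fin (d + 3)), ((e 0 : Fin (d + 3)) : ℕ) < 3 →
      specNorm ((Qinit (d := d)).submatrix e id) = 0 := by
    intro e he
    apply specNorm_of_zero
    intro i j
    have : i = 0 := Subsingleton.elim i 0
    subst this
    rw [Matrix.submatrix_apply]
    have : ¬((e 0 : Fin (d + 3)) : ℕ) = (j : ℕ) + 3 := by omega
    simp [Qinit, this]
  refine ⟨?_, ?_, ?_, ?_⟩
  · rw [hz emb0 (by simp [emb0])]; norm_num
  · rw [hz emb1 (by simp [emb1])]; norm_num
  · rw [hz emb2 (by simp [emb2])]; norm_num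
  · apply specNorm_id
    intro i j
    rw [Matrix.submatrix_apply]
    simp only [Qinit, embT, id]
    by_cases h : i = j
    · subst h; simp
    · rw [if_neg h]; exact if_neg (fun hh => h (Fin.ext (by omega)))

lemma matVec_Qinit_scalar (t : ℕ) (ht : t < 3) (x : EuclideanSpace ℝ (Fin d)) :
    matVec (Qinit (d := d)) x ⟨t, by omega⟩ = 0 := by
  rw [matVec_coord]
  apply Finset.sum_eq_zero
  intro k _
  have : ¬(t = (k : ℕ) + 3) := by omega
  simp [Qinit, this]

lemma matVec_Qinit_embT (x : EuclideanSpace ℝ (Fin d)) (i : Fin d) :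
    matVec (Qinit (d := d)) x (embT i) = x i := by
  rw [matVec_coord]
  rw [Finset.sum_eq_single i]
  · simp [Qinit, embT]
  · intro k _ hk
    have : ¬((i : ℕ) + 3 = (k : ℕ) + 3) := by
      intro h
      exact hk (by ext; omega)
    simp [Qinit, embT, this]
    exact fun h => absurd (Fin.ext h).symm hk
  · intro h; exact absurd (Finset.mem_univ _) h

end Aux4
section Aux5
open Finset

lemma altChain_snoc {α : Type*} (L : ℕ) (Φ : Fin (L + 1) → α → α) (A : Fin L → α → α)
    (Φ' B : α → α) (x : α) :
    altChain (L + 1) (Fin.snoc Φ Φ') (Fin.snoc A B) x = Φ' (B (altChain L Φ A x)) := by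
  have hrfl : altChain (L + 1) (Fin.snoc Φ Φ') (Fin.snoc A B) x =
      (Fin.snoc Φ Φ' : Fin (L + 2) → α → α) (Fin.last (L + 1))
      ((Fin.snoc A B : Fin (L + 1) → α → α) (Fin.last L)
        (altChain L (fun i => (Fin.snoc Φ Φ' : Fin (L + 2) → α → α) i.castSucc)
          (fun i => (Fin.snoc A B : Fin (L + 1) → α → α) i.castSucc) x)) := rfl
  rw [hrfl]
  simp only [Fin.snoc_last, Fin.snoc_castSucc]

variable {d : ℕ} (X : Set (EuclideanSpace ℝ (Fin d)))

def Realized (s : EuclideanSpace ℝ (Fin d) → EuclideanSpace ℝ (Fin (d + 3))) : Prop :=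
  ∃ (L : ℕ) (Qhat : Matrix (Fin (d + 3)) (Fin d) ℝ) (qhat : EuclideanSpace ℝ (Fin (d + 3)))
    (Φ : Fin (L + 1) → (EuclideanSpace ℝ (Fin (d + 3)) → EuclideanSpace ℝ (Fin (d + 3))))
    (Ahat : Fin L → Matrix (Fin (d + 3)) (Fin (d + 3)) ℝ)
    (ahat : Fin L → EuclideanSpace ℝ (Fin (d + 3))),
    memRm Qhat ∧ (∀ ℓ, IsTildeLayer (Φ ℓ)) ∧ (∀ ℓ, memLm (Ahat ℓ)) ∧
    ∀ x ∈ X, s x = altChain L Φ (fun ℓ u => matVec (Ahat ℓ) u + ahat ℓ) (matVec Qhat x + qhat)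

variable {X}

lemma Realized.step {s : EuclideanSpace ℝ (Fin d) → EuclideanSpace ℝ (Fin (d + 3))}
    (hs : Realized X s) (Anew : Matrix (Fin (d + 3)) (Fin (d + 3)) ℝ)
    (anew : EuclideanSpace ℝ (Fin (d + 3)))
    (hA : memLm Anew)
    (Φnew : EuclideanSpace ℝ (Fin (d + 3)) → EuclideanSpace ℝ (Fin (d + 3)))
    (hΦ : IsTildeLayer Φnew) :
    Realized X (fun x => Φnew (matVec Anew (s x) + anew)) := by
  obtain ⟨L, Q, q, Φ, A, a, hQ, hΦs, hAs, heq⟩ := hs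
  refine ⟨L + 1, Q, q, Fin.snoc Φ Φnew, Fin.snoc A Anew, Fin.snoc a anew, hQ, ?_, ?_, ?_⟩
  · intro ℓ
    induction ℓ using Fin.lastCases with
    | last => simpa [Fin.snoc_last] using hΦ
    | cast i => simpa [Fin.snoc_castSucc] using hΦs i
  · intro ℓ
    induction ℓ using Fin.lastCases with
    | last => simpa [Fin.snoc_last] using hA
    | cast i => simpa [Fin.snoc_castSucc] using hAs i
  · intro x hx
    have hfun : (fun (ℓ : Fin (L + 1)) u =>
          matVec ((Fin.snoc A Anew : Fin (L + 1) → _) ℓ) u + (Fin.snoc a anew : Fin (L+1) → _) ℓ)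
        = Fin.snoc (fun (ℓ : Fin L) u => matVec (A ℓ) u + a ℓ)
            (fun u => matVec Anew u + anew) := by
      funext ℓ
      induction ℓ using Fin.lastCases with
      | last => simp [Fin.snoc_last]
      | cast i => simp [Fin.snoc_castSucc]
    rw [hfun, altChain_snoc, ← heq x hx]

def InvSt (X : Set (EuclideanSpace ℝ (Fin d))) (m M : EuclideanSpace ℝ (Fin d) → ℝ) : Prop :=
  ∃ s, Realized X s ∧ ∀ x ∈ X,
    s x ⟨1, by omega⟩ = m x ∧ s x ⟨2, by omega⟩ = M x ∧ ∀ i : Fin d, s x (embT i) = x i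

lemma inv_init (C : ℝ) : InvSt X (fun _ => C) (fun _ => -C) := by
  classical
  set qv : EuclideanSpace ℝ (Fin (d + 3)) :=
    WithLp.toLp 2 (fun j => if (j : ℕ) = 2 then -C else if (j : ℕ) < 2 then C else 0) with hqv
  refine ⟨fun x => tildeLayer id (matVec Qinit x + qv), ?_, ?_⟩
  · exact ⟨0, Qinit, qv, fun _ => tildeLayer id, Fin.elim0, Fin.elim0, memRm_Qinit,
      fun _ => isTildeLayer_tlid, fun ℓ => ℓ.elim0, fun x _ => rfl⟩
  · intro x hx
    have h0 : (matVec Qinit x + qv) ⟨0, by omega⟩ = C := by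
      show matVec Qinit x ⟨0, by omega⟩ + qv ⟨0, by omega⟩ = C
      rw [matVec_Qinit_scalar 0 (by omega)]
      simp [hqv]
    have h1 : (matVec Qinit x + qv) ⟨1, by omega⟩ = C := by
      show matVec Qinit x ⟨1, by omega⟩ + qv ⟨1, by omega⟩ = C
      rw [matVec_Qinit_scalar 1 (by omega)]
      simp [hqv]
    have h2 : (matVec Qinit x + qv) ⟨2, by omega⟩ = -C := by
      show matVec Qinit x ⟨2, by omega⟩ + qv ⟨2, by omega⟩ = -C
      rw [matVec_Qinit_scalar 2 (by omega)]
      simp [hqv]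
    refine ⟨?_, ?_, ?_⟩
    · show tildeLayer id (matVec Qinit x + qv) ⟨1, by omega⟩ = C
      rw [tl_one, h0, h1, min_self]
    · show tildeLayer id (matVec Qinit x + qv) ⟨2, by omega⟩ = -C
      rw [tl_two, h2]
    · intro i
      show tildeLayer id (matVec Qinit x + qv) (embT i) = x i
      rw [tl_embT]
      show matVec Qinit x (embT i) + qv (embT i) = x i
      rw [matVec_Qinit_embT]
      have : qv (embT i) = 0 := by simp [hqv, embT]
      rw [this, add_zero]

end Aux5
section Aux6
open Finset

variable {d : ℕ} {X : Set (EuclideanSpace ℝ (Fin d))}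

def zrow : Fin (d + 3) → ℝ := fun _ => 0

lemma tailvec_erow (t : ℕ) (ht : t < 3) : tailvec (erow (d := d) t) = 0 := by
  ext i
  have hne : ¬((embT i : Fin (d + 3)) : ℕ) = t := by
    have : ((embT i : Fin (d + 3)) : ℕ) = (i : ℕ) + 3 := rfl
    omega
  show erow (d := d) t (embT i) = 0
  simp [erow, hne]

lemma tailvec_zrow : tailvec (zrow (d := d)) = 0 := by
  ext i
  show zrow (d := d) (embT i) = 0
  simp [zrow]

lemma tailvec_trow (a : EuclideanSpace ℝ (Fin d)) : tailvec (trow a) = a := by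
  ext i
  have h3 : 3 ≤ ((embT i : Fin (d + 3)) : ℕ) := by simp [embT]
  show trow a (embT i) = a i
  rw [trow, dif_pos h3]
  exact congrArg a.ofLp (Fin.ext (by simp [embT]))

lemma trow_at_scalar (a : EuclideanSpace ℝ (Fin d)) (s : ℕ) (hs3 : s < 3) (hs : s < d + 3) :
    trow a ⟨s, hs⟩ = 0 := by
  have : ¬ 3 ≤ ((⟨s, hs⟩ : Fin (d + 3)) : ℕ) := by
    simp only [Fin.val_mk]
    omega
  rw [trow, dif_neg this]

lemma zrow_bound : |zrow (d := d) ⟨0, by omega⟩| + |zrow (d := d) ⟨1, by omega⟩|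
    + |zrow (d := d) ⟨2, by omega⟩| + ‖tailvec (zrow (d := d))‖ ≤ 1 := by
  rw [tailvec_zrow]
  simp [zrow]

lemma erow_bound (t : ℕ) (ht : t < 3) :
    |erow (d := d) t ⟨0, by omega⟩| + |erow (d := d) t ⟨1, by omega⟩|
    + |erow (d := d) t ⟨2, by omega⟩| + ‖tailvec (erow (d := d) t)‖ ≤ 1 := by
  rw [tailvec_erow t ht, norm_zero]
  interval_cases t <;> simp [erow]

lemma trow_bound (a : EuclideanSpace ℝ (Fin d)) (ha : ‖a‖ ≤ 1) :
    |trow a ⟨0, by omega⟩| + |trow a ⟨1, by omega⟩| + |trow a ⟨2, by omega⟩|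
    + ‖tailvec (trow a)‖ ≤ 1 := by
  rw [tailvec_trow, trow_at_scalar a 0 (by omega), trow_at_scalar a 1 (by omega),
    trow_at_scalar a 2 (by omega)]
  simpa using ha

lemma inv_min {m M : EuclideanSpace ℝ (Fin d) → ℝ} (h : InvSt X m M)
    (a : EuclideanSpace ℝ (Fin d)) (b : ℝ) (ha : ‖a‖ ≤ 1) :
    InvSt X (fun x => min ((∑ i, a i * x i) + b) (m x)) M := by
  obtain ⟨s, hs, hco⟩ := h
  set Am := M3rows (trow a) (erow (d := d) 1) (erow 2) with hAm
  set bv : EuclideanSpace ℝ (Fin (d + 3)) := WithLp.toLp 2 (fun j => if (j : ℕ) = 0 then b else 0) with hbv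
  have hmem : memLm Am := memLm_M3rows _ _ _ (trow_bound a ha) (erow_bound 1 (by omega))
    (erow_bound 2 (by omega))
  refine ⟨fun x => tildeLayer id (matVec Am (s x) + bv),
    hs.step Am bv hmem _ isTildeLayer_tlid, ?_⟩
  intro x hx
  obtain ⟨h1, h2, htail⟩ := hco x hx
  have u0 : (matVec Am (s x) + bv) ⟨0, by omega⟩ = (∑ i, a i * x i) + b := by
    show matVec Am (s x) ⟨0, by omega⟩ + bv ⟨0, by omega⟩ = _
    rw [hAm, matVec_M3rows_zero, sum_trow]
    have : ∀ i ∈ Finset.univ, a i * s x (embT i) = a i * x i := fun i _ => by rw [htail i]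
    rw [Finset.sum_congr rfl this]
    simp [hbv]
  have u1 : (matVec Am (s x) + bv) ⟨1, by omega⟩ = m x := by
    show matVec Am (s x) ⟨1, by omega⟩ + bv ⟨1, by omega⟩ = _
    rw [hAm, matVec_M3rows_one, sum_erow 1 (by omega), h1]
    simp [hbv]
  have u2 : (matVec Am (s x) + bv) ⟨2, by omega⟩ = M x := by
    show matVec Am (s x) ⟨2, by omega⟩ + bv ⟨2, by omega⟩ = _
    rw [hAm, matVec_M3rows_two, sum_erow 2 (by omega), h2]
    simp [hbv]
  have uT : ∀ i, (matVec Am (s x) + bv) (embT i) = x i := by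
    intro i
    show matVec Am (s x) (embT i) + bv (embT i) = _
    rw [hAm, matVec_M3rows_embT, htail i]
    have : bv (embT i) = 0 := by simp [hbv, embT]
    rw [this, add_zero]
  refine ⟨?_, ?_, ?_⟩
  · show tildeLayer id (matVec Am (s x) + bv) ⟨1, by omega⟩ = _
    rw [tl_one, u0, u1]
  · show tildeLayer id (matVec Am (s x) + bv) ⟨2, by omega⟩ = _
    rw [tl_two, u2]
  · intro i
    show tildeLayer id (matVec Am (s x) + bv) (embT i) = _
    rw [tl_embT, uT]

lemma inv_merge {m M : EuclideanSpace ℝ (Fin d) → ℝ} (h : InvSt X m M) (C : ℝ) :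
    InvSt X (fun _ => C) (fun x => max (m x) (M x)) := by
  obtain ⟨s, hs, hco⟩ := h
  set A1 := M3rows (erow (d := d) 1) (erow 2) zrow with hA1
  set A2 := M3rows (zrow (d := d)) zrow (erow 0) with hA2
  set b2 : EuclideanSpace ℝ (Fin (d + 3)) := WithLp.toLp 2 (fun j => if (j : ℕ) < 2 then C else 0) with hb2
  have hm1 : memLm A1 := memLm_M3rows _ _ _ (erow_bound 1 (by omega)) (erow_bound 2 (by omega))
    zrow_bound
  have hm2 : memLm A2 := memLm_M3rows _ _ _ zrow_bound zrow_bound (erow_bound 0 (by omega))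
  set s1 : EuclideanSpace ℝ (Fin d) → EuclideanSpace ℝ (Fin (d + 3)) :=
    fun x => tildeLayer id (matVec A1 (s x) + 0) with hs1def
  have hreal1 : Realized X s1 := hs.step A1 0 hm1 _ isTildeLayer_tlid
  have hco1 : ∀ x ∈ X, s1 x ⟨0, by omega⟩ = max (m x) (M x) ∧ s1 x ⟨2, by omega⟩ = 0 ∧
      ∀ i : Fin d, s1 x (embT i) = x i := by
    intro x hx
    obtain ⟨h1, h2, htail⟩ := hco x hx
    have u0 : (matVec A1 (s x) + 0) ⟨0, by omega⟩ = m x := by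
      show matVec A1 (s x) ⟨0, by omega⟩ + (0 : EuclideanSpace ℝ (Fin (d+3))) ⟨0, by omega⟩ = _
      rw [hA1, matVec_M3rows_zero, sum_erow 1 (by omega), h1]
      simp
    have u1 : (matVec A1 (s x) + 0) ⟨1, by omega⟩ = M x := by
      show matVec A1 (s x) ⟨1, by omega⟩ + (0 : EuclideanSpace ℝ (Fin (d+3))) ⟨1, by omega⟩ = _
      rw [hA1, matVec_M3rows_one, sum_erow 2 (by omega), h2]
      simp
    have u2 : (matVec A1 (s x) + 0) ⟨2, by omega⟩ = 0 := by
      show matVec A1 (s x) ⟨2, by omega⟩ + (0 : EuclideanSpace ℝ (Fin (d+3))) ⟨2, by omega⟩ = _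
      rw [hA1, matVec_M3rows_two]
      simp [zrow]
    have uT : ∀ i, (matVec A1 (s x) + 0) (embT i) = x i := by
      intro i
      show matVec A1 (s x) (embT i) + (0 : EuclideanSpace ℝ (Fin (d+3))) (embT i) = _
      rw [hA1, matVec_M3rows_embT, htail i]
      simp
    refine ⟨?_, ?_, ?_⟩
    · show tildeLayer id (matVec A1 (s x) + 0) ⟨0, by omega⟩ = _
      rw [tl_zero, u0, u1]
    · show tildeLayer id (matVec A1 (s x) + 0) ⟨2, by omega⟩ = _
      rw [tl_two, u2]
    · intro i
      show tildeLayer id (matVec A1 (s x) + 0) (embT i) = _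
      rw [tl_embT, uT]
  refine ⟨fun x => tildeLayer id (matVec A2 (s1 x) + b2),
    hreal1.step A2 b2 hm2 _ isTildeLayer_tlid, ?_⟩
  intro x hx
  obtain ⟨k0, k2, ktail⟩ := hco1 x hx
  have u0 : (matVec A2 (s1 x) + b2) ⟨0, by omega⟩ = C := by
    show matVec A2 (s1 x) ⟨0, by omega⟩ + b2 ⟨0, by omega⟩ = _
    rw [hA2, matVec_M3rows_zero]
    simp [zrow, hb2]
  have u1 : (matVec A2 (s1 x) + b2) ⟨1, by omega⟩ = C := by
    show matVec A2 (s1 x) ⟨1, by omega⟩ + b2 ⟨1, by omega⟩ = _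
    rw [hA2, matVec_M3rows_one]
    simp [zrow, hb2]
  have u2 : (matVec A2 (s1 x) + b2) ⟨2, by omega⟩ = max (m x) (M x) := by
    show matVec A2 (s1 x) ⟨2, by omega⟩ + b2 ⟨2, by omega⟩ = _
    rw [hA2, matVec_M3rows_two, sum_erow 0 (by omega), k0]
    simp [hb2]
  have uT : ∀ i, (matVec A2 (s1 x) + b2) (embT i) = x i := by
    intro i
    show matVec A2 (s1 x) (embT i) + b2 (embT i) = _
    rw [hA2, matVec_M3rows_embT, ktail i]
    have : b2 (embT i) = 0 := by simp [hb2, embT]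
    rw [this, add_zero]
  refine ⟨?_, ?_, ?_⟩
  · show tildeLayer id (matVec A2 (s1 x) + b2) ⟨1, by omega⟩ = _
    rw [tl_one, u0, u1, min_self]
  · show tildeLayer id (matVec A2 (s1 x) + b2) ⟨2, by omega⟩ = _
    rw [tl_two, u2]
  · intro i
    show tildeLayer id (matVec A2 (s1 x) + b2) (embT i) = _
    rw [tl_embT, uT]

lemma InvSt.toInTildeG {m M : EuclideanSpace ℝ (Fin d) → ℝ} (h : InvSt X m M) :
    InTildeG (n := d) X M := by
  obtain ⟨s, ⟨L, Q, q, Φ, A, a, hQ, hΦ, hA, heq⟩, hco⟩ := h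
  set v : EuclideanSpace ℝ (Fin (d + 3)) := WithLp.toLp 2 (fun j => if (j : ℕ) = 2 then 1 else 0) with hv
  refine ⟨L, Q, q, Φ, A, a, v, hQ, hΦ, hA, ?_, ?_⟩
  · rw [sum_fin_add_three (fun j => |v j|)]
    have hT : ∀ i : Fin d, |v (embT i)| = 0 := by
      intro i
      have : ¬((embT i : Fin (d + 3)) : ℕ) = 2 := by simp [embT]
      simp [hv, this]
    rw [Finset.sum_congr rfl fun i _ => hT i]
    simp [hv]
  · intro x hx
    simp only [← heq x hx]
    rw [sum_fin_add_three (fun j => v j * s x j)]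
    have hT : ∀ i : Fin d, v (embT i) * s x (embT i) = 0 := by
      intro i
      have : ¬((embT i : Fin (d + 3)) : ℕ) = 2 := by simp [embT]
      simp [hv, this]
    rw [Finset.sum_congr rfl fun i _ => hT i]
    have h2 := (hco x hx).2.1
    simp [hv, h2]

end Aux6
noncomputable section Aux7
open Finset

variable {d : ℕ} {X : Set (EuclideanSpace ℝ (Fin d))}

def aff {n : ℕ} (ab : EuclideanSpace ℝ (Fin n) × ℝ) (x : EuclideanSpace ℝ (Fin n)) : ℝ :=
  (∑ i, ab.1 i * x i) + ab.2

lemma inv_foldmin {m M : EuclideanSpace ℝ (Fin d) → ℝ} (h : InvSt X m M)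
    (l : List (EuclideanSpace ℝ (Fin d) × ℝ)) (hl : ∀ ab ∈ l, ‖ab.1‖ ≤ 1) :
    InvSt X (fun x => l.foldl (fun acc ab => min (aff ab x) acc) (m x)) M := by
  induction l generalizing m with
  | nil => simpa using h
  | cons ab t ih =>
    simp only [List.foldl_cons]
    have h1 : InvSt X (fun x => min (aff ab x) (m x)) M :=
      inv_min h ab.1 ab.2 (hl ab (List.mem_cons_self))
    exact ih h1 fun p hp => hl p (List.mem_cons_of_mem _ hp)

def minL {n : ℕ} (C : ℝ) (l : List (EuclideanSpace ℝ (Fin n) × ℝ))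
    (x : EuclideanSpace ℝ (Fin n)) : ℝ :=
  l.foldl (fun acc ab => min (aff ab x) acc) C

def maxB {n : ℕ} (C : ℝ) (B : List (List (EuclideanSpace ℝ (Fin n) × ℝ)))
    (x : EuclideanSpace ℝ (Fin n)) : ℝ :=
  B.foldl (fun acc l => max (minL C l x) acc) (-C)

lemma inv_foldmax {M : EuclideanSpace ℝ (Fin d) → ℝ} (C : ℝ)
    (B : List (List (EuclideanSpace ℝ (Fin d) × ℝ)))
    (h : InvSt X (fun _ => C) M)
    (hB : ∀ l ∈ B, ∀ ab ∈ l, ‖ab.1‖ ≤ 1) :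
    InvSt X (fun _ => C) (fun x => B.foldl (fun acc l => max (minL C l x) acc) (M x)) := by
  induction B generalizing M with
  | nil => simpa using h
  | cons l t ih =>
    simp only [List.foldl_cons]
    have h1 : InvSt X (fun x => minL C l x) M :=
      inv_foldmin h l (hB l (List.mem_cons_self))
    have h2 : InvSt X (fun _ => C) (fun x => max (minL C l x) (M x)) := inv_merge h1 C
    exact ih h2 fun l' hl' => hB l' (List.mem_cons_of_mem _ hl')

lemma maxB_in_tildeG (C : ℝ) (B : List (List (EuclideanSpace ℝ (Fin d) × ℝ)))
    (hB : ∀ l ∈ B, ∀ ab ∈ l, ‖ab.1‖ ≤ 1) :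
    InTildeG (n := d) X (maxB C B) := by
  have h0 : InvSt X (fun _ => C) (fun _ => -C) := inv_init C
  have h1 := inv_foldmax C B h0 hB
  exact h1.toInTildeG

/-! ### elementary fold bounds -/

lemma foldl_max_ge_init {β : Type*} (B : List β) (F : β → ℝ) (init : ℝ) :
    init ≤ B.foldl (fun acc l => max (F l) acc) init := by
  induction B generalizing init with
  | nil => simp
  | cons l t ih => exact le_trans (le_max_right (F l) init) (ih _)

lemma foldl_max_le {β : Type*} (B : List β) (F : β → ℝ) (init c : ℝ) (h0 : init ≤ c)
    (hB : ∀ l ∈ B, F l ≤ c) : B.foldl (fun acc l => max (F l) acc) init ≤ c := by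
  induction B generalizing init with
  | nil => simpa using h0
  | cons l t ih =>
    simp only [List.foldl_cons]
    exact ih _ (max_le (hB l (List.mem_cons_self)) h0)
      (fun l' hl' => hB l' (List.mem_cons_of_mem _ hl'))

lemma le_foldl_max_of_mem {β : Type*} (B : List β) (F : β → ℝ) (init : ℝ) {l : β}
    (hl : l ∈ B) : F l ≤ B.foldl (fun acc l => max (F l) acc) init := by
  induction B generalizing init with
  | nil => exact absurd hl (List.not_mem_nil)
  | cons a t ih =>
    simp only [List.foldl_cons]
    rcases List.mem_cons.mp hl with h | h
    · subst h
      exact le_trans (le_max_left (F l) init) (foldl_max_ge_init t F _)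
    · exact ih _ h

lemma foldl_min_le_init {β : Type*} (l : List β) (G : β → ℝ) (init : ℝ) :
    l.foldl (fun acc ab => min (G ab) acc) init ≤ init := by
  induction l generalizing init with
  | nil => simp
  | cons a t ih => exact le_trans (ih _) (min_le_right (G a) init)

lemma le_foldl_min {β : Type*} (l : List β) (G : β → ℝ) (init c : ℝ) (h0 : c ≤ init)
    (h : ∀ ab ∈ l, c ≤ G ab) : c ≤ l.foldl (fun acc ab => min (G ab) acc) init := by
  induction l generalizing init with
  | nil => simpa using h0
  | cons a t ih =>
    simp only [List.foldl_cons]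
    exact ih _ (le_min (h a (List.mem_cons_self)) h0)
      (fun ab hab => h ab (List.mem_cons_of_mem _ hab))

lemma foldl_min_le_of_mem {β : Type*} (l : List β) (G : β → ℝ) (init : ℝ) {ab : β}
    (hab : ab ∈ l) : l.foldl (fun acc ab => min (G ab) acc) init ≤ G ab := by
  induction l generalizing init with
  | nil => exact absurd hab (List.not_mem_nil)
  | cons a t ih =>
    simp only [List.foldl_cons]
    rcases List.mem_cons.mp hab with h | h
    · subst h
      exact le_trans (foldl_min_le_init t G _) (min_le_left (G ab) init)
    · exact ih _ h

/-! ### the interpolating affine pieces -/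

lemma aff_sub_le {n : ℕ} (ab : EuclideanSpace ℝ (Fin n) × ℝ) (x y : EuclideanSpace ℝ (Fin n)) :
    |aff ab x - aff ab y| ≤ ‖ab.1‖ * ‖x - y‖ := by
  have key : aff ab x - aff ab y = (inner ℝ ab.1 (x - y) : ℝ) := by
    rw [← sum_mul_eq_inner]
    have e : ∀ i ∈ Finset.univ, ab.1 i * (x - y) i = ab.1 i * x i - ab.1 i * y i := by
      intro i _
      have hsub : (x - y) i = x i - y i := rfl
      rw [hsub]; ring
    rw [Finset.sum_congr rfl e, Finset.sum_sub_distrib]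
    simp only [aff]
    ring
  rw [key]
  exact abs_real_inner_le_norm _ _

variable (f : EuclideanSpace ℝ (Fin d) → ℝ)

open Classical in
def avec (p q : EuclideanSpace ℝ (Fin d)) : EuclideanSpace ℝ (Fin d) :=
  if p = q then 0 else ((f p - f q) / ‖p - q‖ ^ 2) • (p - q)

def bval (p q : EuclideanSpace ℝ (Fin d)) : ℝ := f p - ∑ i, avec f p q i * p i

lemma aff_avec_eq (p q x : EuclideanSpace ℝ (Fin d)) :
    aff (avec f p q, bval f p q) x = f p + (inner ℝ (avec f p q) (x - p) : ℝ) := by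
  rw [← sum_mul_eq_inner]
  have e : ∀ i ∈ Finset.univ, avec f p q i * (x - p) i
      = avec f p q i * x i - avec f p q i * p i := by
    intro i _
    have hsub : (x - p) i = x i - p i := rfl
    rw [hsub]; ring
  rw [Finset.sum_congr rfl e, Finset.sum_sub_distrib]
  simp only [aff, bval]
  ring

lemma aff_avec_self (p q : EuclideanSpace ℝ (Fin d)) :
    aff (avec f p q, bval f p q) p = f p := by
  rw [aff_avec_eq]
  simp

lemma aff_avec_other (p q : EuclideanSpace ℝ (Fin d)) :
    aff (avec f p q, bval f p q) q = f q := by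
  rw [aff_avec_eq]
  by_cases hpq : p = q
  · subst hpq; simp
  · have hne : p - q ≠ 0 := sub_ne_zero.mpr hpq
    have hnorm : ‖p - q‖ ^ 2 ≠ 0 := pow_ne_zero 2 (norm_ne_zero_iff.mpr hne)
    rw [avec, if_neg hpq]
    rw [real_inner_smul_left]
    have : (inner ℝ (p - q) (q - p) : ℝ) = -(‖p - q‖ ^ 2) := by
      have : q - p = -(p - q) := by abel
      rw [this, inner_neg_right, real_inner_self_eq_norm_sq]
    rw [this]
    field_simp
    ring

lemma avec_norm_le (hf : LipschitzOnWith 1 f X) (p q : EuclideanSpace ℝ (Fin d))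
    (hp : p ∈ X) (hq : q ∈ X) : ‖avec f p q‖ ≤ 1 := by
  by_cases hpq : p = q
  · rw [avec, if_pos hpq]; simp
  · have hne : p - q ≠ 0 := sub_ne_zero.mpr hpq
    have hnpos : (0 : ℝ) < ‖p - q‖ := norm_pos_iff.mpr hne
    have hdist : |f p - f q| ≤ ‖p - q‖ := by
      have := (lipschitzOnWith_iff_dist_le_mul.mp hf) p hp q hq
      simpa [Real.dist_eq, dist_eq_norm] using this
    rw [avec, if_neg hpq, norm_smul]
    rw [Real.norm_eq_abs, abs_div]
    have h1 : |f p - f q| / |‖p - q‖ ^ 2| * ‖p - q‖ = |f p - f q| / ‖p - q‖ := by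
      rw [abs_of_nonneg (by positivity : (0:ℝ) ≤ ‖p - q‖ ^ 2)]
      field_simp
    rw [h1]
    rw [div_le_one hnpos]
    exact hdist

end Aux7

/-- Universal approximation with fixed width `h = d + 3`: the class
`tilde-G_{d,ReLU,d+3}(X,ℝ)` is dense in the `1`-Lipschitz functions on a compact set `X`. -/
theorem stmt13 (d : ℕ) (X : Set (EuclideanSpace ℝ (Fin d))) (hX : IsCompact X)
    (f : EuclideanSpace ℝ (Fin d) → ℝ) (hf : LipschitzOnWith 1 f X)
    (ε : ℝ) (hε : 0 < ε) :
    ∃ g : EuclideanSpace ℝ (Fin d) → ℝ,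
      InTildeG (n := d) X g ∧ ∀ x ∈ X, |f x - g x| < ε := by
  classical
  set δ : ℝ := ε / 3 with hδ
  have hδpos : 0 < δ := by positivity
  obtain ⟨t, htX, htfin, hcov⟩ := hX.finite_cover_balls hδpos
  obtain ⟨C, hC⟩ := hX.exists_bound_of_continuousOn hf.continuousOn
  set P : List (EuclideanSpace ℝ (Fin d)) := htfin.toFinset.toList with hP
  have hmemP : ∀ p, p ∈ P ↔ p ∈ t := by
    intro p
    rw [hP, Finset.mem_toList, Set.Finite.mem_toFinset]
  set B := P.map (fun p => P.map (fun q => (avec f p q, bval f p q))) with hBdef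
  have hnorm : ∀ l ∈ B, ∀ ab ∈ l, ‖ab.1‖ ≤ 1 := by
    intro l hl ab hab
    rw [hBdef] at hl
    obtain ⟨p, hp, rfl⟩ := List.mem_map.mp hl
    obtain ⟨q, hq, rfl⟩ := List.mem_map.mp hab
    exact avec_norm_le f hf p q (htX ((hmemP p).mp hp)) (htX ((hmemP q).mp hq))
  refine ⟨maxB C B, maxB_in_tildeG C B hnorm, ?_⟩
  intro x hx
  obtain ⟨r, hrt, hxr⟩ : ∃ r ∈ t, x ∈ Metric.ball r δ := by
    have := hcov hx
    simpa using this
  have hrX : r ∈ X := htX hrt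
  have hrP : r ∈ P := (hmemP r).mpr hrt
  have hxrd : ‖x - r‖ ≤ δ := by
    rw [← dist_eq_norm]
    exact le_of_lt (Metric.mem_ball.mp hxr)
  have hfx : |f x| ≤ C := by simpa [Real.norm_eq_abs] using hC x hx
  have hLip : |f r - f x| ≤ δ := by
    have := (lipschitzOnWith_iff_dist_le_mul.mp hf) r hrX x hx
    rw [Real.dist_eq, dist_eq_norm] at this
    have h8 : |f r - f x| ≤ ‖r - x‖ := by simpa using this
    have h9 : ‖r - x‖ = ‖x - r‖ := norm_sub_rev r x
    linarith
  -- upper bound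
  have hub : maxB C B x ≤ f x + 2 * δ := by
    refine foldl_max_le B (fun l => minL C l x) (-C) (f x + 2 * δ) ?_ ?_
    · have := neg_le_of_abs_le hfx
      linarith
    · intro l hl
      rw [hBdef] at hl
      obtain ⟨p, hp, rfl⟩ := List.mem_map.mp hl
      have hpX : p ∈ X := htX ((hmemP p).mp hp)
      have hmem : (avec f p r, bval f p r) ∈ P.map (fun q => (avec f p q, bval f p q)) :=
        List.mem_map.mpr ⟨r, hrP, rfl⟩
      have h1 : minL C (P.map (fun q => (avec f p q, bval f p q))) x
          ≤ aff (avec f p r, bval f p r) x :=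
        foldl_min_le_of_mem _ (fun ab => aff ab x) C hmem
      have h2 := aff_sub_le (avec f p r, bval f p r) x r
      have h3 : aff (avec f p r, bval f p r) r = f r := aff_avec_other f p r
      have h4 : ‖avec f p r‖ ≤ 1 := avec_norm_le f hf p r hpX hrX
      have h5 : ‖(avec f p r, bval f p r).1‖ * ‖x - r‖ ≤ δ := by
        calc ‖(avec f p r, bval f p r).1‖ * ‖x - r‖ ≤ 1 * δ :=
              mul_le_mul h4 hxrd (norm_nonneg _) zero_le_one
          _ = δ := one_mul δ
      have h6 := (abs_le.mp h2).2
      have h7 := (abs_le.mp hLip).2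
      rw [h3] at h6
      beta_reduce
      calc minL C (List.map (fun q => (avec f p q, bval f p q)) P) x
          ≤ aff (avec f p r, bval f p r) x := h1
        _ ≤ f r + δ := by linarith
        _ ≤ f x + 2 * δ := by linarith
  -- lower bound
  have hlb : f x - 2 * δ ≤ maxB C B x := by
    have hmemB : P.map (fun q => (avec f r q, bval f r q)) ∈ B :=
      hBdef ▸ List.mem_map.mpr ⟨r, hrP, rfl⟩
    have h1 : minL C (P.map (fun q => (avec f r q, bval f r q))) x ≤ maxB C B x :=
      le_foldl_max_of_mem B (fun l => minL C l x) (-C) hmemB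
    have h2 : f x - 2 * δ ≤ minL C (P.map (fun q => (avec f r q, bval f r q))) x := by
      refine le_foldl_min _ (fun ab => aff ab x) C (f x - 2 * δ) ?_ ?_
      · have := le_abs_self (f x)
        linarith
      · intro ab hab
        obtain ⟨q, hq, rfl⟩ := List.mem_map.mp hab
        have h3 := aff_sub_le (avec f r q, bval f r q) x r
        have h4 : aff (avec f r q, bval f r q) r = f r := aff_avec_self f r q
        have h5 : ‖(avec f r q, bval f r q).1‖ * ‖x - r‖ ≤ δ := by
          calc ‖(avec f r q, bval f r q).1‖ * ‖x - r‖ ≤ 1 * δ :=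
                mul_le_mul (avec_norm_le f hf r q hrX (htX ((hmemP q).mp hq))) hxrd
                  (norm_nonneg _) zero_le_one
            _ = δ := one_mul δ
        have h6 := (abs_le.mp h3).1
        have h7 := (abs_le.mp hLip).1
        rw [h4] at h6
        beta_reduce
        calc f x - 2 * δ ≤ f r - δ := by linarith
          _ ≤ aff (avec f r q, bval f r q) x := by linarith
    linarith
  have : |f x - maxB C B x| ≤ 2 * δ := abs_le.mpr ⟨by linarith, by linarith⟩
  have h2δ : 2 * δ < ε := by rw [hδ]; linarith
  linarith
end
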